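/- Let n be a natural number and let a, b : Fin n → ℝ be monotone (non-decreasing) sequences. Then for every permutation σ of Fin n, max over i of |a_i − b_i| ≤ max over i of |a_i − b_{σ(i)}|. In other words, among all bijective matchings between the two sorted sequences, the identity (order-preserving) matching minimizes the maximum absolute difference of matched values. -/

import Mathlib

/-- Pigeonhole: every permutation has a "crossing" at each index. -/
lemma perm_exists_cross (n : ℕ) (σ : Equiv.Perm (Fin n)) (i : Fin n) :
    ∃ j, i ≤ j ∧ σ j ≤ i := by
  by_contra h
  push_neg at h
  have h1 : (Finset.Ici i).card ≤ (Finset.Ioi i).card := by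
    apply Finset.card_le_card_of_injOn σ
    · intro j hj
      simp only [Finset.mem_coe, Finset.mem_Ici] at hj
      simpa using h j hj
    · exact σ.injective.injOn
  have h2 : (Finset.Ioi i).card < (Finset.Ici i).card := by
    apply Finset.card_lt_card
    constructor
    · intro x hx; simp only [Finset.mem_Ioi] at hx; simp [le_of_lt hx]
    · intro hsub
      have := hsub (Finset.mem_Ici.2 le_rfl)
      simp at this
  omega

lemma perm_exists_cross' (n : ℕ) (σ : Equiv.Perm (Fin n)) (i : Fin n) :
    ∃ j, j ≤ i ∧ i ≤ σ j := by
  obtain ⟨j, hij, hji⟩ := perm_exists_cross n σ⁻¹ i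
  exact ⟨σ⁻¹ j, hji, by simpa using hij⟩

/-- Among all bijective matchings between two non-decreasing sequences of reals,
the identity (order-preserving) matching minimizes the maximum absolute difference.
The maximum over an empty index set is taken to be 0. -/
theorem sorted_matching_optimal (n : ℕ) (a b : Fin n → ℝ)
    (ha : Monotone a) (hb : Monotone b) (σ : Equiv.Perm (Fin n)) :
    Finset.fold max 0 (fun i => |a i - b i|) Finset.univ ≤
      Finset.fold max 0 (fun i => |a i - b (σ i)|) Finset.univ := by
  rw [Finset.fold_max_le]
  refine ⟨?_, fun i _ => ?_⟩
  · rw [Finset.le_fold_max]; exact Or.inl le_rfl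
  rcases le_total (b i) (a i) with h | h
  · obtain ⟨j, hij, hji⟩ := perm_exists_cross n σ i
    rw [Finset.le_fold_max]
    refine Or.inr ⟨j, Finset.mem_univ j, ?_⟩
    have h1 := ha hij
    have h2 := hb hji
    rw [abs_of_nonneg (sub_nonneg.2 h)]
    calc a i - b i ≤ a j - b (σ j) := by linarith
      _ ≤ |a j - b (σ j)| := le_abs_self _
  · obtain ⟨j, hij, hji⟩ := perm_exists_cross' n σ i
    rw [Finset.le_fold_max]
    refine Or.inr ⟨j, Finset.mem_univ j, ?_⟩
    have h1 := ha hij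
    have h2 := hb hji
    rw [abs_of_nonpos (sub_nonpos.2 h)]
    calc -(a i - b i) = b i - a i := by ring
      _ ≤ b (σ j) - a j := by linarith
      _ ≤ |a j - b (σ j)| := by rw [abs_sub_comm]; exact le_abs_self _
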